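/- Let F : B₁(1) → ℂ be holomorphic on the open disc of radius 1 centered at 1, let 1 < ρ < 2, and let α ∈ ℂ with Re(α) > 0. Then ∫₁^ρ (z-1)^α z^(-k-1) F(z) dz = O(k^(-Re(α)-1)) as k → ∞; more precisely, if |F| ≤ M on [1, ρ], then the integral is bounded in modulus by M·Γ(k - Re α)Γ(Re α + 1)/Γ(k+1). -/

import Mathlib

open Complex MeasureTheory

lemma beta_real {p q : ℝ} (hp : 0 < p) (hq : 0 < q) :
    IntervalIntegrable (fun u : ℝ => u ^ (p-1) * (1-u) ^ (q-1)) volume 0 1 ∧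
    ∫ u in (0:ℝ)..1, u ^ (p-1) * (1-u) ^ (q-1)
      = Real.Gamma p * Real.Gamma q / Real.Gamma (p+q) := by
  have heq : ∀ x ∈ Set.Icc (0:ℝ) 1,
      (x:ℂ) ^ ((p:ℂ)-1) * (1-(x:ℂ)) ^ ((q:ℂ)-1)
        = ((x ^ (p-1) * (1-x) ^ (q-1) : ℝ) : ℂ) := by
    intro x hx
    rw [Complex.ofReal_mul, Complex.ofReal_cpow hx.1, Complex.ofReal_cpow (by linarith [hx.2])]
    push_cast
    ring_nf
  have hconv := Complex.betaIntegral_convergent (u := (p:ℂ)) (v := (q:ℂ))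
    (by simpa using hp) (by simpa using hq)
  have hconv' : IntervalIntegrable (fun x : ℝ => ((x ^ (p-1) * (1-x) ^ (q-1) : ℝ) : ℂ))
      volume 0 1 := by
    rw [intervalIntegrable_iff_integrableOn_Ioc_of_le zero_le_one] at hconv ⊢
    exact hconv.congr_fun (fun x hx => heq x (Set.Ioc_subset_Icc_self hx)) measurableSet_Ioc
  have hint : IntervalIntegrable (fun u : ℝ => u ^ (p-1) * (1-u) ^ (q-1)) volume 0 1 := by
    rw [intervalIntegrable_iff_integrableOn_Ioc_of_le zero_le_one] at hconv' ⊢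
    have h := hconv'.re
    simp at h
    exact h
  refine ⟨hint, ?_⟩
  have hΓ : Complex.Gamma ((p:ℂ)+(q:ℂ)) ≠ 0 := by
    rw [← Complex.ofReal_add, Complex.Gamma_ofReal]
    exact_mod_cast (Real.Gamma_pos_of_pos (by positivity)).ne'
  have hbeta := Complex.Gamma_mul_Gamma_eq_betaIntegral (s := (p:ℂ)) (t := (q:ℂ))
    (by simpa using hp) (by simpa using hq)
  have h2 : ((∫ u in (0:ℝ)..1, u ^ (p-1) * (1-u) ^ (q-1) : ℝ) : ℂ)
      = Complex.betaIntegral p q := by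
    rw [← intervalIntegral.integral_ofReal]
    unfold Complex.betaIntegral
    refine intervalIntegral.integral_congr fun x hx => ?_
    rw [Set.uIcc_of_le zero_le_one] at hx
    exact (heq x hx).symm
  have h3 : Complex.betaIntegral p q = Complex.Gamma p * Complex.Gamma q / Complex.Gamma (p+q) := by
    rw [eq_div_iff hΓ, hbeta]; ring
  rw [← Complex.ofReal_inj, h2, h3, ← Complex.ofReal_add, Complex.Gamma_ofReal,
    Complex.Gamma_ofReal, Complex.Gamma_ofReal]
  push_cast
  ring

lemma cont_bound (ρ : ℝ) {a : ℝ} (ha : 0 < a) (e : ℝ) :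
    ContinuousOn (fun x : ℝ => (x-1) ^ a * x ^ e) (Set.Icc 1 ρ) := by
  apply ContinuousOn.mul
  · exact ((continuous_id.sub continuous_const).continuousOn).rpow_const
      (fun x _ => Or.inr ha.le)
  · exact continuousOn_id.rpow_const (fun x hx => Or.inl (by rintro rfl; exact absurd hx.1 (by norm_num)))

lemma key_bound (ρ : ℝ) (hρ1 : 1 < ρ) (α : ℂ) (hα : 0 < α.re)
    (F : ℂ → ℂ) (M : ℝ) (hM : ∀ x : ℝ, x ∈ Set.Icc 1 ρ → ‖F (x:ℂ)‖ ≤ M) (k : ℕ) :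
    ‖∫ z in (1:ℝ)..ρ, ((z : ℂ) - 1) ^ α * (z : ℂ) ^ (-(k : ℂ) - 1) * F (z : ℂ)‖
      ≤ M * ∫ x in (1:ℝ)..ρ, (x-1) ^ α.re * x ^ (-(k:ℝ)-1) := by
  set a := α.re
  have hgi : IntervalIntegrable (fun x : ℝ => (x-1) ^ a * x ^ (-(k:ℝ)-1)) volume 1 ρ := by
    apply ContinuousOn.intervalIntegrable
    rw [Set.uIcc_of_le hρ1.le]
    exact cont_bound ρ hα _
  have hbd : ∀ᵐ (t : ℝ) ∂(volume.restrict (Set.uIoc (1:ℝ) ρ)),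
      ‖((t : ℂ) - 1) ^ α * (t : ℂ) ^ (-(k : ℂ) - 1) * F (t : ℂ)‖
        ≤ M * ((t-1) ^ a * t ^ (-(k:ℝ)-1)) := by
    refine (ae_restrict_mem measurableSet_uIoc).mono (fun t ht => ?_)
    rw [Set.uIoc_of_le hρ1.le] at ht
    have ht1 : (1:ℝ) < t := ht.1
    have h1 : ‖((t : ℂ) - 1) ^ α‖ = (t-1) ^ a := by
      have : (t : ℂ) - 1 = ((t - 1 : ℝ) : ℂ) := by push_cast; ring
      rw [this, Complex.norm_cpow_eq_rpow_re_of_pos (by linarith)]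
    have h2 : ‖(t : ℂ) ^ (-(k : ℂ) - 1)‖ = t ^ (-(k:ℝ)-1) := by
      rw [Complex.norm_cpow_eq_rpow_re_of_pos (by linarith)]
      norm_num
    rw [norm_mul, norm_mul, h1, h2]
    have h3 : (0:ℝ) ≤ (t-1) ^ a := Real.rpow_nonneg (by linarith) _
    have h4 : (0:ℝ) ≤ t ^ (-(k:ℝ)-1) := Real.rpow_nonneg (by linarith) _
    calc (t-1) ^ a * t ^ (-(k:ℝ)-1) * ‖F (t:ℂ)‖
        ≤ (t-1) ^ a * t ^ (-(k:ℝ)-1) * M :=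
          mul_le_mul_of_nonneg_left (hM t ⟨ht1.le, ht.2⟩) (mul_nonneg h3 h4)
      _ = M * ((t-1) ^ a * t ^ (-(k:ℝ)-1)) := by ring
  calc ‖∫ z in (1:ℝ)..ρ, ((z : ℂ) - 1) ^ α * (z : ℂ) ^ (-(k : ℂ) - 1) * F (z : ℂ)‖
      ≤ |∫ x in (1:ℝ)..ρ, M * ((x-1) ^ a * x ^ (-(k:ℝ)-1))| :=
        intervalIntegral.norm_integral_le_abs_of_norm_le hbd (hgi.const_mul M)
    _ = ∫ x in (1:ℝ)..ρ, M * ((x-1) ^ a * x ^ (-(k:ℝ)-1)) := by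
        apply _root_.abs_of_nonneg
        apply intervalIntegral.integral_nonneg hρ1.le
        intro x hx
        have hM0 : 0 ≤ M := le_trans (norm_nonneg _) (hM 1 ⟨le_refl 1, hρ1.le⟩)
        have : (0:ℝ) ≤ (x-1) ^ a := Real.rpow_nonneg (by linarith [hx.1]) _
        have : (0:ℝ) ≤ x ^ (-(k:ℝ)-1) := Real.rpow_nonneg (by linarith [hx.1]) _
        positivity
    _ = M * ∫ x in (1:ℝ)..ρ, (x-1) ^ a * x ^ (-(k:ℝ)-1) :=
        intervalIntegral.integral_const_mul _ _

lemma subst_beta (ρ : ℝ) (hρ1 : 1 < ρ) {a : ℝ} (ha : 0 < a) (b : ℝ) :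
    ∫ x in (1:ℝ)..ρ, (x-1) ^ a * x ^ (-a - b - 2)
      = ∫ u in (0:ℝ)..(1-1/ρ), u ^ a * (1-u) ^ b := by
  have hρ0 : (0:ℝ) < ρ := by linarith
  have hderiv : ∀ x ∈ Set.uIcc (1:ℝ) ρ, HasDerivAt (fun y : ℝ => 1 - y⁻¹) ((x^2)⁻¹) x := by
    intro x hx
    rw [Set.uIcc_of_le hρ1.le] at hx
    have hx0 : x ≠ 0 := by rintro rfl; exact absurd hx.1 (by norm_num)
    simpa using (hasDerivAt_inv hx0).const_sub 1
  have hcont : ContinuousOn (fun x : ℝ => (x^2)⁻¹) (Set.uIcc (1:ℝ) ρ) := by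
    apply ContinuousOn.inv₀ (continuousOn_pow 2)
    intro x hx
    rw [Set.uIcc_of_le hρ1.le] at hx
    have : (1:ℝ) ≤ x := hx.1
    positivity
  have himg : (fun y : ℝ => 1 - y⁻¹) '' Set.uIcc (1:ℝ) ρ ⊆ Set.Icc 0 (1-1/ρ) := by
    rintro _ ⟨x, hx, rfl⟩
    rw [Set.uIcc_of_le hρ1.le] at hx
    have hx1 : (1:ℝ) ≤ x := hx.1
    have hx0 : (0:ℝ) < x := by linarith
    constructor
    · simp only [sub_nonneg]
      exact inv_le_one_of_one_le₀ hx1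
    · have : 1/ρ ≤ x⁻¹ := by
        rw [one_div]
        exact inv_anti₀ hx0 hx.2 |>.trans_eq rfl
      linarith
  have hgc : ContinuousOn (fun u : ℝ => u ^ a * (1-u) ^ b)
      ((fun y : ℝ => 1 - y⁻¹) '' Set.uIcc (1:ℝ) ρ) := by
    apply ContinuousOn.mono ?_ himg
    apply ContinuousOn.mul
    · exact continuousOn_id.rpow_const (fun u _ => Or.inr ha.le)
    · apply ContinuousOn.rpow_const (continuous_const.sub continuous_id).continuousOn
      intro u hu
      left
      have h1 : (0:ℝ) < 1/ρ := by positivity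
      have h2 := hu.2
      intro h; rw [Pi.sub_apply, sub_eq_zero] at h
      simp only [id] at h
      nlinarith
  have := intervalIntegral.integral_comp_smul_deriv' hderiv hcont hgc
  simp only [Function.comp] at this
  rw [show (1:ℝ) - (1:ℝ)⁻¹ = 0 by norm_num, show (1:ℝ) - ρ⁻¹ = 1 - 1/ρ by rw [one_div]] at this
  rw [← this]
  apply intervalIntegral.integral_congr
  intro x hx
  rw [Set.uIcc_of_le hρ1.le] at hx
  have hx0 : (0:ℝ) < x := by linarith [hx.1]
  have hx1 : (0:ℝ) ≤ x - 1 := by linarith [hx.1]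
  have e2 : (1:ℝ) - (1 - x⁻¹) = x⁻¹ := by ring
  have e1 : (1:ℝ) - x⁻¹ = (x-1)/x := by field_simp
  simp only []
  rw [smul_eq_mul, e2, e1, Real.div_rpow hx1 hx0.le, Real.inv_rpow hx0.le,
    ← Real.rpow_neg hx0.le, div_eq_mul_inv, ← Real.rpow_neg hx0.le,
    show ((x:ℝ)^2)⁻¹ = x ^ (-2:ℝ) by
      rw [← Real.rpow_natCast x 2, ← Real.rpow_neg hx0.le]; norm_num]
  have hxs : x ^ (-a - b - 2) = x ^ (-2:ℝ) * (x ^ (-a) * x ^ (-b)) := by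
    rw [← Real.rpow_add hx0, ← Real.rpow_add hx0]; ring_nf
  rw [hxs]; ring
lemma beta_le (ρ : ℝ) (hρ1 : 1 < ρ) {a b : ℝ} (ha : 0 < a) (hb : -1 < b) :
    ∫ u in (0:ℝ)..(1-1/ρ), u ^ a * (1-u) ^ b
      ≤ Real.Gamma (a+1) * Real.Gamma (b+1) / Real.Gamma (a+b+2) := by
  have h := beta_real (p := a+1) (q := b+1) (by linarith) (by linarith)
  simp only [add_sub_cancel_right] at h
  have h2 : a + 1 + (b + 1) = a + b + 2 := by ring
  rw [h2] at h
  refine le_trans ?_ (le_of_eq h.2)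
  apply intervalIntegral.integral_mono_interval le_rfl (by
      have : 0 < 1/ρ := by positivity
      have : 1/ρ < 1 := by rw [div_lt_one (by linarith)]; exact hρ1
      linarith) (by
      have : 0 < 1/ρ := by positivity
      linarith)
  · filter_upwards [ae_restrict_mem measurableSet_Ioc] with u hu
    have h1 : (0:ℝ) ≤ u := hu.1.le
    have h2 : (0:ℝ) ≤ 1 - u := by linarith [hu.2]
    positivity
  · exact h.1

lemma exp_gamma_le {a : ℝ} (ha : 0 < a) {s : ℝ} (hs : 0 ≤ s) :
    ∫ v in (0:ℝ)..s, Real.exp (-v) * v ^ a ≤ Real.Gamma (a+1) := by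
  have hgi : IntegrableOn (fun x : ℝ => Real.exp (-x) * x ^ a) (Set.Ioi 0) volume := by
    simpa using Real.GammaIntegral_convergent (s := a+1) (by linarith)
  rw [Real.Gamma_eq_integral (by linarith : (0:ℝ) < a + 1)]
  simp only [add_sub_cancel_right]
  rw [intervalIntegral.integral_of_le hs]
  apply setIntegral_mono_set hgi
  · filter_upwards [ae_restrict_mem measurableSet_Ioi] with v hv
    have : (0:ℝ) < v := hv
    positivity
  · exact (Set.Ioc_subset_Ioi_self).eventuallyLE

lemma exp_int {a : ℝ} (ha : 0 < a) {c : ℝ} (hc : 0 < c) {r : ℝ} (hr : 0 ≤ r) :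
    ∫ u in (0:ℝ)..r, u ^ a * Real.exp (-(c*u)) ≤ c ^ (-(a+1)) * Real.Gamma (a+1) := by
  have h1 := intervalIntegral.integral_comp_mul_right (fun v => Real.exp (-v) * v ^ a) hc.ne' (a := 0) (b := r)
  simp only [zero_mul] at h1
  have h2 : ∫ u in (0:ℝ)..r, u ^ a * Real.exp (-(c*u))
      = c ^ (-a) * ∫ u in (0:ℝ)..r, Real.exp (-(u*c)) * (u*c) ^ a := by
    rw [← intervalIntegral.integral_const_mul]
    apply intervalIntegral.integral_congr
    intro u hu
    rw [Set.uIcc_of_le hr] at hu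
    have hu0 : (0:ℝ) ≤ u := hu.1
    simp only []
    rw [Real.mul_rpow hu0 hc.le,
      show c ^ (-a) = (c ^ a)⁻¹ by rw [Real.rpow_neg hc.le], mul_comm u c]
    have : (c:ℝ) ^ a ≠ 0 := by positivity
    field_simp
  rw [h2, h1, smul_eq_mul]
  have h3 : (0:ℝ) ≤ r * c := by positivity
  have h4 := exp_gamma_le ha h3
  have h5 : (0:ℝ) ≤ c ^ (-a) := Real.rpow_nonneg hc.le _
  calc c ^ (-a) * (c⁻¹ * ∫ v in (0:ℝ)..(r*c), Real.exp (-v) * v ^ a)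
      ≤ c ^ (-a) * (c⁻¹ * Real.Gamma (a+1)) := by
        apply mul_le_mul_of_nonneg_left _ h5
        exact mul_le_mul_of_nonneg_left h4 (by positivity)
    _ = c ^ (-(a+1)) * Real.Gamma (a+1) := by
        rw [show c ^ (-(a+1)) = c ^ (-a) * c⁻¹ by
          rw [← Real.rpow_neg_one c, ← Real.rpow_add hc]; ring_nf]
        ring


/-- Lemma 3 (second part): if `F` is holomorphic on the open unit disc centered at `1`,
`1 < ρ < 2` and `Re α > 0`, then `∫₁^ρ (z-1)^α z^(-k-1) F(z) dz = O(k^(-Re α - 1))`;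
more precisely, if `|F| ≤ M` on `[1, ρ]` then the integral is bounded in modulus by
`M Γ(k - Re α) Γ(Re α + 1) / Γ(k+1)`. -/
theorem stmt3 (ρ : ℝ) (hρ1 : 1 < ρ) (hρ2 : ρ < 2) (α : ℂ) (hα : 0 < α.re)
    (F : ℂ → ℂ) (hF : DifferentiableOn ℂ F (Metric.ball (1 : ℂ) 1))
    (M : ℝ) (hM : ∀ x : ℝ, x ∈ Set.Icc 1 ρ → ‖F (x : ℂ)‖ ≤ M) :
    (∀ k : ℕ, α.re < (k : ℝ) →
      ‖∫ z in (1:ℝ)..ρ, ((z : ℂ) - 1) ^ α * (z : ℂ) ^ (-(k : ℂ) - 1) * F (z : ℂ)‖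
        ≤ M * Real.Gamma ((k : ℝ) - α.re) * Real.Gamma (α.re + 1) / Real.Gamma ((k : ℝ) + 1)) ∧
    ∃ C : ℝ, ∀ k : ℕ, 1 ≤ k →
      ‖∫ z in (1:ℝ)..ρ, ((z : ℂ) - 1) ^ α * (z : ℂ) ^ (-(k : ℂ) - 1) * F (z : ℂ)‖
        ≤ C * (k : ℝ) ^ (-α.re - 1) := by
  set a := α.re with ha_def
  have hM0 : 0 ≤ M := le_trans (norm_nonneg _) (hM 1 ⟨le_refl 1, hρ1.le⟩)
  constructor
  · -- part 1
    intro k hk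
    have hb : (-1:ℝ) < (k:ℝ) - a - 1 := by linarith
    calc ‖∫ z in (1:ℝ)..ρ, ((z : ℂ) - 1) ^ α * (z : ℂ) ^ (-(k : ℂ) - 1) * F (z : ℂ)‖
        ≤ M * ∫ x in (1:ℝ)..ρ, (x-1) ^ a * x ^ (-(k:ℝ)-1) :=
          key_bound ρ hρ1 α hα F M hM k
      _ ≤ M * (Real.Gamma (a+1) * Real.Gamma (((k:ℝ)-a-1)+1) / Real.Gamma (a+((k:ℝ)-a-1)+2)) := by
          apply mul_le_mul_of_nonneg_left _ hM0
          rw [show -(k:ℝ)-1 = -a - ((k:ℝ)-a-1) - 2 by ring, subst_beta ρ hρ1 hα _]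
          exact beta_le ρ hρ1 hα hb
      _ = M * Real.Gamma ((k : ℝ) - a) * Real.Gamma (a + 1) / Real.Gamma ((k : ℝ) + 1) := by
          rw [show ((k:ℝ)-a-1)+1 = (k:ℝ)-a by ring, show a+((k:ℝ)-a-1)+2 = (k:ℝ)+1 by ring]
          ring
  · -- part 2
    refine ⟨M * (Real.Gamma (a+1) * (2:ℝ) ^ (a+1)), fun k hk1 => ?_⟩
    have hk0 : (0:ℝ) < (k:ℝ) := by exact_mod_cast hk1
    have hc : (0:ℝ) < (k:ℝ)/2 := by positivity
    have hJi : IntervalIntegrable (fun x : ℝ => (x-1) ^ a * x ^ (-(k:ℝ)-1)) volume 1 ρ := by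
      apply ContinuousOn.intervalIntegrable
      rw [Set.uIcc_of_le hρ1.le]
      exact cont_bound ρ hα _
    have hEi : IntervalIntegrable
        (fun x : ℝ => (x-1) ^ a * Real.exp (-((k:ℝ)/2 * (x-1)))) volume 1 ρ := by
      apply ContinuousOn.intervalIntegrable
      apply ContinuousOn.mul
      · exact ((continuous_id.sub continuous_const).continuousOn).rpow_const
          (fun x _ => Or.inr hα.le)
      · exact (Real.continuous_exp.comp (by continuity)).continuousOn
    have hpt : ∀ x ∈ Set.Icc (1:ℝ) ρ,
        (x-1) ^ a * x ^ (-(k:ℝ)-1) ≤ (x-1) ^ a * Real.exp (-((k:ℝ)/2 * (x-1))) := by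
      intro x hx
      have hx1 : (1:ℝ) ≤ x := hx.1
      have hx0 : (0:ℝ) < x := by linarith
      have hx2 : x ≤ 2 := le_trans hx.2 hρ2.le
      apply mul_le_mul_of_nonneg_left _ (Real.rpow_nonneg (by linarith) _)
      rw [Real.rpow_def_of_pos hx0]
      apply Real.exp_le_exp.2
      have hlog0 : 0 ≤ Real.log x := Real.log_nonneg hx1
      have hlog : (x-1)/2 ≤ Real.log x := by
        have h := Real.log_le_sub_one_of_pos (x := x⁻¹) (by positivity)
        rw [Real.log_inv] at h
        have h2 : 1 - x⁻¹ - (x-1)/2 = (x-1)*(2-x)/(2*x) := by field_simp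
        have h3 : 0 ≤ (x-1)*(2-x)/(2*x) :=
          div_nonneg (mul_nonneg (by linarith) (by linarith)) (by linarith)
        linarith
      have h1 : (k:ℝ)*((x-1)/2) ≤ (k:ℝ)*Real.log x :=
        mul_le_mul_of_nonneg_left hlog hk0.le
      linarith
    calc ‖∫ z in (1:ℝ)..ρ, ((z : ℂ) - 1) ^ α * (z : ℂ) ^ (-(k : ℂ) - 1) * F (z : ℂ)‖
        ≤ M * ∫ x in (1:ℝ)..ρ, (x-1) ^ a * x ^ (-(k:ℝ)-1) :=
          key_bound ρ hρ1 α hα F M hM k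
      _ ≤ M * ∫ x in (1:ℝ)..ρ, (x-1) ^ a * Real.exp (-((k:ℝ)/2 * (x-1))) :=
          mul_le_mul_of_nonneg_left
            (intervalIntegral.integral_mono_on hρ1.le hJi hEi hpt) hM0
      _ = M * ∫ u in (0:ℝ)..(ρ-1), u ^ a * Real.exp (-((k:ℝ)/2 * u)) := by
          have := intervalIntegral.integral_comp_sub_right
            (fun u : ℝ => u ^ a * Real.exp (-((k:ℝ)/2 * u))) 1 (a := 1) (b := ρ)
          simp only [sub_self] at this
          rw [this]
      _ ≤ M * (((k:ℝ)/2) ^ (-(a+1)) * Real.Gamma (a+1)) := by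
          apply mul_le_mul_of_nonneg_left _ hM0
          exact exp_int hα hc (by linarith)
      _ = M * (Real.Gamma (a+1) * (2:ℝ) ^ (a+1)) * (k:ℝ) ^ (-a - 1) := by
          rw [Real.div_rpow hk0.le (by norm_num : (0:ℝ) ≤ 2),
            show ((2:ℝ)) ^ (-(a+1)) = ((2:ℝ) ^ (a+1))⁻¹ by
              rw [Real.rpow_neg (by norm_num)],
            show (-(a+1)) = -a - 1 by ring]
          field_simp
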